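/- With Λ(a,i) = σ_{a-1}^i (elementary symmetric polynomials of degree a−1 in the variables u^j, j ≠ i) for pairwise distinct reals u^1,…,u^n, the fundamental functions satisfy f_i^{jh} := det(Λ_j^i)/det(Λ_h^i) = (u^i)^{h−j} for all i and all j, h for which det Λ_h^i ≠ 0. -/

import Mathlib

open Matrix BigOperators

/-- The submatrix of `M` obtained by deleting row `h` and column `i`. -/
def delMinor {n : ℕ} (M : Matrix (Fin (n+1)) (Fin (n+1)) ℝ) (h i : Fin (n+1)) :
    Matrix (Fin n) (Fin n) ℝ :=
  M.submatrix h.succAbove i.succAbove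

/-- The elementary symmetric polynomial of degree `a` in the variables `u j`, `j ≠ i`. -/
noncomputable def esymmDel {n : ℕ} (u : Fin n → ℝ) (i : Fin n) (a : ℕ) : ℝ :=
  ∑ t ∈ Finset.powersetCard a (Finset.univ.erase i), ∏ j ∈ t, u j

lemma prod_sub_expand {ι : Type*} [DecidableEq ι] (s : Finset ι) (u : ι → ℝ) (x : ℝ) :
    ∏ j ∈ s, (x - u j) = ∑ a ∈ Finset.range (s.card + 1),
      (-1:ℝ)^a * (∑ t ∈ Finset.powersetCard a s, ∏ j ∈ t, u j) * x^(s.card - a) := by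
  have h := Finset.prod_add (fun j => -u j) (fun _ => x) s
  simp only [neg_add_eq_sub] at h
  rw [h, Finset.powerset_card_disjiUnion]
  erw [Finset.sum_disjiUnion]
  refine Finset.sum_congr rfl fun a _ => ?_
  rw [Finset.mul_sum, Finset.sum_mul]
  refine Finset.sum_congr rfl fun t ht => ?_
  obtain ⟨hts, htc⟩ := Finset.mem_powersetCard.mp ht
  rw [Finset.prod_const, Finset.card_sdiff_of_subset hts, htc]
  have : ∏ j ∈ t, -u j = (-1:ℝ)^a * ∏ j ∈ t, u j := by
    rw [← htc, ← Finset.prod_const, ← Finset.prod_mul_distrib]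
    exact Finset.prod_congr rfl fun j _ => (neg_one_mul _).symm
  rw [this]

/-- for the matrix of elementary symmetric polynomials, the fundamental
functions are f_i^{jh} = det(Λ_j^i)/det(Λ_h^i) = (u^i)^{h−j}. -/
theorem stmt12 {n : ℕ} (u : Fin (n+1) → ℝ) (hu : Function.Injective u)
    (hu0 : ∀ i, u i ≠ 0)
    (Λ : Matrix (Fin (n+1)) (Fin (n+1)) ℝ)
    (hΛ : ∀ a i : Fin (n+1), Λ a i = esymmDel u i (a : ℕ)) :
    ∀ i j h : Fin (n+1), (delMinor Λ h i).det ≠ 0 →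
      (delMinor Λ j i).det / (delMinor Λ h i).det
        = (u i) ^ ((h : ℤ) - (j : ℤ)) := by
  intro i j h hmh
  set x : ℝ := u i with hx
  have hx0 : x ≠ 0 := hu0 i
  -- the vector w
  set w : Fin (n+1) → ℝ := fun a => (-1:ℝ)^(a:ℕ) * x^(n - (a:ℕ)) with hw
  -- the product D
  set D : ℝ := ∏ l ∈ Finset.univ.erase i, (x - u l) with hD
  have hD0 : D ≠ 0 := by
    rw [hD]
    refine Finset.prod_ne_zero_iff.mpr fun l hl => ?_
    have hli : l ≠ i := (Finset.mem_erase.mp hl).1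
    exact sub_ne_zero.mpr fun hc => hli (hu (hc.symm))
  have hcard : ∀ k : Fin (n+1), (Finset.univ.erase k).card = n := by
    intro k
    rw [Finset.card_erase_of_mem (Finset.mem_univ k), Finset.card_univ, Fintype.card_fin]
    omega
  -- key sum identity
  have hsum : ∀ k : Fin (n+1), ∑ a : Fin (n+1), w a * Λ a k
      = ∏ l ∈ Finset.univ.erase k, (x - u l) := by
    intro k
    have hexp := prod_sub_expand (Finset.univ.erase k) u x
    rw [hcard k] at hexp
    rw [hexp]
    rw [← Fin.sum_univ_eq_sum_range
      (fun a => (-1:ℝ)^a * (∑ t ∈ Finset.powersetCard a (Finset.univ.erase k), ∏ j ∈ t, u j)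
        * x^(n - a))]
    refine Finset.sum_congr rfl fun a _ => ?_
    rw [hΛ a k, hw]
    simp only [esymmDel]
    ring
  -- mulVec form
  have hmv : Λᵀ.mulVec w = fun k => if k = i then D else 0 := by
    funext k
    have hrw : Λᵀ.mulVec w k = ∑ a, w a * Λ a k := by
      simp [Matrix.mulVec, dotProduct, Matrix.transpose_apply, mul_comm]
    rw [hrw, hsum k]
    by_cases hk : k = i
    · simp [hk, hD]
    · rw [if_neg hk]
      refine Finset.prod_eq_zero (Finset.mem_erase.mpr ⟨fun hc => hk hc.symm, Finset.mem_univ i⟩) ?_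
      simp [hx]
  -- multiply by adjugate
  have hkey : ∀ p : Fin (n+1), Λ.det * w p = (adjugate Λ) i p * D := by
    intro p
    have h1 : (adjugate Λᵀ).mulVec (Λᵀ.mulVec w) = Λ.det • w := by
      rw [Matrix.mulVec_mulVec, Matrix.adjugate_mul, Matrix.det_transpose,
        Matrix.smul_mulVec, Matrix.one_mulVec]
    have h2 := congrFun h1 p
    rw [hmv] at h2
    have h3 : (adjugate Λᵀ).mulVec (fun k => if k = i then D else 0) p
        = adjugate Λᵀ p i * D := by
      rw [Matrix.mulVec]
      rw [show ((adjugate Λᵀ) p ⬝ᵥ fun k => if k = i then D else 0)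
        = ∑ a, (adjugate Λᵀ) p a * (if a = i then D else 0) from rfl]
      rw [Finset.sum_eq_single i]
      · simp
      · intro b _ hb; simp [hb]
      · intro hc; exact absurd (Finset.mem_univ i) hc
    rw [h3] at h2
    have h4 : adjugate Λᵀ p i = adjugate Λ i p := by
      rw [← Matrix.adjugate_transpose, Matrix.transpose_apply]
    rw [h4] at h2
    simpa [mul_comm] using h2.symm
  -- rewrite adjugate via minors
  have hadj : ∀ p : Fin (n+1), adjugate Λ i p
      = (-1:ℝ)^((p:ℕ) + (i:ℕ)) * (delMinor Λ p i).det := by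
    intro p
    rw [Matrix.adjugate_fin_succ_eq_det_submatrix]
    rfl
  -- clean key: Λ.det * x^(n-p) = (-1)^i * D * m p
  have hkey2 : ∀ p : Fin (n+1), Λ.det * x^(n - (p:ℕ))
      = (-1:ℝ)^(i:ℕ) * D * (delMinor Λ p i).det := by
    intro p
    have := hkey p
    rw [hadj p, hw] at this
    have hne : ((-1:ℝ)^(p:ℕ)) ≠ 0 := pow_ne_zero _ (by norm_num)
    refine mul_left_cancel₀ hne ?_
    rw [pow_add] at this
    linear_combination this
  -- finish
  set mj := (delMinor Λ j i).det
  set mh := (delMinor Λ h i).det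
  have e1 := hkey2 j
  have e2 := hkey2 h
  have hc0 : (-1:ℝ)^(i:ℕ) * D ≠ 0 := mul_ne_zero (pow_ne_zero _ (by norm_num)) hD0
  have hz : x ^ ((h : ℤ) - (j : ℤ)) = x^(n - (j:ℕ)) / x^(n - (h:ℕ)) := by
    rw [← zpow_natCast x (n - (j:ℕ)), ← zpow_natCast x (n - (h:ℕ)), ← zpow_sub₀ hx0]
    congr 1
    have hj := Fin.is_le j
    have hh := Fin.is_le h
    omega
  rw [hz]
  rw [div_eq_div_iff hmh (pow_ne_zero _ hx0)]
  refine mul_left_cancel₀ hc0 ?_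
  linear_combination x^(n - (j:ℕ)) * e2 - x^(n - (h:ℕ)) * e1
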